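/- Bitonic merge correctness (zero-one principle case): if a sequence of bits (0s and 1s) of length n = 2^t is bitonic, then after applying compare-and-swap to each pair (a_i, a_{i+n/2}) for 0 <= i < n/2, both resulting halves are bitonic and every element of the first half is at most every element of the second half. -/

import Mathlib

/-- A list is bitonic if some circular shift of it first (weakly) increases
and then (weakly) decreases. -/
def IsBitonic {α : Type*} [LinearOrder α] (l : List α) : Prop :=
  ∃ (m : ℕ) (l1 l2 : List α),
    l.rotate m = l1 ++ l2 ∧ l1.Pairwise (· ≤ ·) ∧ l2.Pairwise (· ≥ ·)

open List

private lemma rot_rot {α : Type*} (v : List α) (k j : ℕ) (hv : v ≠ []) :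
    (v.rotate k).rotate (v.length - k % v.length + j) = v.rotate j := by
  have hL : 0 < v.length := List.length_pos_iff.mpr hv
  rw [List.rotate_rotate, ← List.rotate_mod, ← List.rotate_mod v j]
  congr 1
  have hdm := Nat.div_add_mod k v.length
  have hlt : k % v.length < v.length := Nat.mod_lt _ hL
  have : k + (v.length - k % v.length + j) = v.length + j + v.length * (k / v.length) := by
    omega
  rw [this, Nat.add_mul_mod_self_left, Nat.add_mod_left]

private lemma isBitonic_rotate {v : List Bool} (k : ℕ) (hv : IsBitonic v) :
    IsBitonic (v.rotate k) := by
  by_cases hne : v = []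
  · subst hne; simpa using hv
  · obtain ⟨j, l1, l2, he, h1, h2⟩ := hv
    exact ⟨v.length - k % v.length + j, l1, l2, by rw [rot_rot v k j hne, he], h1, h2⟩

private lemma sorted_le_bool {l : List Bool} (h : l.Pairwise (· ≤ ·)) :
    ∃ a b, l = replicate a false ++ replicate b true := by
  induction l with
  | nil => exact ⟨0, 0, rfl⟩
  | cons x xs ih =>
    rw [List.pairwise_cons] at h
    obtain ⟨hx, hs⟩ := h
    obtain ⟨a, b, rfl⟩ := ih hs
    cases x with
    | false => exact ⟨a+1, b, by simp [List.replicate_succ]⟩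
    | true =>
      cases a with
      | zero => exact ⟨0, b+1, by simp [List.replicate_succ]⟩
      | succ a' =>
        have := hx false (by simp [List.replicate_succ])
        exact absurd this (by decide)

private lemma sorted_ge_bool {l : List Bool} (h : l.Pairwise (· ≥ ·)) :
    ∃ a b, l = replicate a true ++ replicate b false := by
  induction l with
  | nil => exact ⟨0, 0, rfl⟩
  | cons x xs ih =>
    rw [List.pairwise_cons] at h
    obtain ⟨hx, hs⟩ := h
    obtain ⟨a, b, rfl⟩ := ih hs
    cases x with
    | true => exact ⟨a+1, b, by simp [List.replicate_succ]⟩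
    | false =>
      cases a with
      | zero => exact ⟨0, b+1, by simp [List.replicate_succ]⟩
      | succ a' =>
        have := hx true (by simp [List.replicate_succ])
        exact absurd this (by decide)

private lemma bitonic_canon {l : List Bool} (hb : IsBitonic l) (hne : l ≠ []) :
    ∃ m a e d, l = ((replicate a false ++ replicate e true ++ replicate d false).rotate m)
      ∧ a + e + d = l.length := by
  obtain ⟨m, l1, l2, he, h1, h2⟩ := hb
  obtain ⟨a, b, rfl⟩ := sorted_le_bool h1
  obtain ⟨c, d, rfl⟩ := sorted_ge_bool h2
  have hc : l.rotate m = replicate a false ++ replicate (b+c) true ++ replicate d false := by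
    rw [he, List.replicate_add]
    simp only [List.append_assoc]
  have hlen : a + (b+c) + d = l.length := by
    have := congrArg List.length hc
    simp at this
    omega
  have hr := rot_rot l m 0 hne
  rw [hc, List.rotate_zero] at hr
  exact ⟨l.length - m % l.length + 0, a, b+c, d, hr.symm, hlen⟩


private lemma mod2' (x h : ℕ) (hx : x < 2*h) : x % h = x ∨ (x % h) + h = x := by
  rcases Nat.lt_or_ge x h with hc | hc
  · left; exact Nat.mod_eq_of_lt hc
  · right
    have h0 : 0 < h := by omega
    rw [Nat.mod_eq_sub_mod hc, Nat.mod_eq_of_lt (by omega)]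
    omega

private lemma length_halfzip (f : Bool → Bool → Bool) (v : List Bool) (h : ℕ)
    (hv : v.length = 2*h) : (zipWith f (v.take h) (v.drop h)).length = h := by
  simp [hv]; omega

private lemma getElem_halfzip {f : Bool → Bool → Bool} {v : List Bool} {h i : ℕ}
    (hv : v.length = 2*h) (hi : i < h) :
    (zipWith f (v.take h) (v.drop h))[i]'(by rw [length_halfzip f v h hv]; exact hi)
      = f (v[i]'(by omega)) (v[h+i]'(by omega)) := by
  simp [List.getElem_zipWith, List.getElem_take, List.getElem_drop]

private lemma halfzip_rotate (f : Bool → Bool → Bool) (hf : ∀ x y, f x y = f y x)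
    (v : List Bool) (h k : ℕ) (hh : 0 < h) (hv : v.length = 2*h) :
    zipWith f ((v.rotate k).take h) ((v.rotate k).drop h)
      = (zipWith f (v.take h) (v.drop h)).rotate (k % h) := by
  have hrl : (v.rotate k).length = 2*h := by rw [List.length_rotate, hv]
  have hzl : (zipWith f (v.take h) (v.drop h)).length = h := length_halfzip f v h hv
  apply List.ext_getElem
  · rw [length_halfzip f _ h hrl, List.length_rotate, hzl]
  · intro i hi1 hi2
    have hi : i < h := by rwa [length_halfzip f _ h hrl] at hi1
    have hjh : (i + k % h) % h < h := Nat.mod_lt _ hh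
    rw [getElem_halfzip hrl hi, List.getElem_rotate, List.getElem_rotate,
        List.getElem_rotate]
    simp only [hzl]
    rw [getElem_halfzip hv hjh]
    simp only [hv]
    have hj : (i + k % h) % h = (i + k) % h := by rw [Nat.add_mod_mod]
    simp only [hj]
    set j := (i + k) % h with hjd
    have hjh2 : j < h := Nat.mod_lt _ hh
    have hdvd : h ∣ 2*h := ⟨2, by ring⟩
    have hr2 : (i + k) % (2*h) % h = j := Nat.mod_mod_of_dvd _ hdvd
    have hr1 : (i + k) % (2*h) < 2*h := Nat.mod_lt _ (by omega)
    have h3 : (h+i+k) % (2*h) = ((i+k) % (2*h) + h) % (2*h) := by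
      rw [Nat.mod_add_mod]; congr 1; ring
    rcases mod2' ((i+k) % (2*h)) h hr1 with hc | hc
    · have e1 : (i+k) % (2*h) = j := hc.symm.trans hr2
      have e2 : (h+i+k) % (2*h) = h + j := by
        rw [h3, e1, Nat.mod_eq_of_lt (by omega), Nat.add_comm]
      simp only [e1, e2]
      rfl
    · have e1 : (i+k) % (2*h) = h + j := by rw [← hc, hr2, Nat.add_comm]
      have e2 : (h+i+k) % (2*h) = j := by
        rw [h3, e1, show h + j + h = j + 1*(2*h) from by ring,
          Nat.add_mul_mod_self_right, Nat.mod_eq_of_lt (by omega)]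
      simp only [e1, e2]
      exact hf _ _

private lemma getElem_canon (a e d i : ℕ) (hi : i < a + e + d) :
    (replicate a false ++ replicate e true ++ replicate d false)[i]'(by simp; omega)
      = decide (a ≤ i ∧ i < a + e) := by
  simp only [List.getElem_append, List.length_append, List.length_replicate,
    List.getElem_replicate]
  split_ifs with h1 h2 <;> simp at h1 ⊢ <;> omega

private lemma bitonic_of_interval {v : List Bool} {h p q : ℕ} (hv : v.length = h)
    (hq : q ≤ h)
    (hch : ∀ i (hi : i < h), v[i]'(by omega) = true ↔ (p ≤ i ∧ i < q)) :
    IsBitonic v := by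
  refine ⟨p, [], v.rotate p, by simp, List.Pairwise.nil, ?_⟩
  rw [List.pairwise_iff_getElem]
  intro i j hi hj hij
  simp only [List.length_rotate, hv] at hi hj
  rw [List.getElem_rotate, List.getElem_rotate]
  simp only [hv]
  have hh : 0 < h := by omega
  rw [ge_iff_le, Bool.le_iff_imp]
  intro hB
  have hA' : (i + p) % h < h := Nat.mod_lt _ hh
  have hB' : (j + p) % h < h := Nat.mod_lt _ hh
  rw [hch _ hB'] at hB
  rw [hch _ hA']
  rcases mod2' (i + p) h (by omega) with hcA | hcA <;>
    rcases mod2' (j + p) h (by omega) with hcB | hcB <;> omega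

private lemma bitonic_of_wrap {v : List Bool} {h p q : ℕ} (hv : v.length = h)
    (hqp : q ≤ p) (hp : p ≤ h)
    (hch : ∀ i (hi : i < h), v[i]'(by omega) = true ↔ (i < q ∨ p ≤ i)) :
    IsBitonic v := by
  refine ⟨p, [], v.rotate p, by simp, List.Pairwise.nil, ?_⟩
  rw [List.pairwise_iff_getElem]
  intro i j hi hj hij
  simp only [List.length_rotate, hv] at hi hj
  rw [List.getElem_rotate, List.getElem_rotate]
  simp only [hv]
  have hh : 0 < h := by omega
  rw [ge_iff_le, Bool.le_iff_imp]
  intro hB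
  have hA' : (i + p) % h < h := Nat.mod_lt _ hh
  have hB' : (j + p) % h < h := Nat.mod_lt _ hh
  rw [hch _ hB'] at hB
  rw [hch _ hA']
  rcases mod2' (i + p) h (by omega) with hcA | hcA <;>
    rcases mod2' (j + p) h (by omega) with hcB | hcB <;> omega

private lemma bool_min_true {x y : Bool} : (min x y = true) ↔ (x = true ∧ y = true) := by
  revert x y; decide

private lemma bool_max_true {x y : Bool} : (max x y = true) ↔ (x = true ∨ y = true) := by
  revert x y; decide

private lemma canon_main (h a e d : ℕ) (hh : 0 < h) (hsum : a + e + d = 2*h) :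
    (IsBitonic (zipWith min ((replicate a false ++ replicate e true ++ replicate d false).take h)
        ((replicate a false ++ replicate e true ++ replicate d false).drop h))) ∧
    (IsBitonic (zipWith max ((replicate a false ++ replicate e true ++ replicate d false).take h)
        ((replicate a false ++ replicate e true ++ replicate d false).drop h))) ∧
    (∀ x ∈ zipWith min ((replicate a false ++ replicate e true ++ replicate d false).take h)
        ((replicate a false ++ replicate e true ++ replicate d false).drop h),
      ∀ y ∈ zipWith max ((replicate a false ++ replicate e true ++ replicate d false).take h)
        ((replicate a false ++ replicate e true ++ replicate d false).drop h),
        x ≤ y) := by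
  set c : List Bool := replicate a false ++ replicate e true ++ replicate d false with hcd
  have hcl : c.length = 2*h := by simp [hcd]; omega
  have hminchar : ∀ i (hi : i < h),
      (zipWith min (c.take h) (c.drop h))[i]'(by rw [length_halfzip min c h hcl]; exact hi) = true
        ↔ (a ≤ i ∧ h + i < a + e) := by
    intro i hi
    rw [getElem_halfzip hcl hi]
    simp only [hcd]
    rw [getElem_canon a e d i (by omega), getElem_canon a e d (h+i) (by omega)]
    rw [bool_min_true]
    simp only [decide_eq_true_eq]
    omega
  have hmaxchar : ∀ i (hi : i < h),
      (zipWith max (c.take h) (c.drop h))[i]'(by rw [length_halfzip max c h hcl]; exact hi) = true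
        ↔ ((a ≤ i ∧ i < a + e) ∨ (a ≤ h + i ∧ h + i < a + e)) := by
    intro i hi
    rw [getElem_halfzip hcl hi]
    simp only [hcd]
    rw [getElem_canon a e d i (by omega), getElem_canon a e d (h+i) (by omega)]
    rw [bool_max_true]
    simp only [decide_eq_true_eq]
  refine ⟨?_, ?_, ?_⟩
  · -- min half bitonic: interval [a, min (a+e-h) h)
    apply bitonic_of_interval (p := a) (q := min (a+e-h) h) (length_halfzip min c h hcl)
      (by omega)
    intro i hi
    rw [hminchar i hi]
    omega
  · -- max half
    rcases le_or_gt h a with hah | hah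
    · apply bitonic_of_interval (p := a - h) (q := min (a+e-h) h)
        (length_halfzip max c h hcl) (by omega)
      intro i hi
      rw [hmaxchar i hi]
      omega
    · rcases le_or_gt (a+e) h with hae | hae
      · apply bitonic_of_interval (p := a) (q := a+e) (length_halfzip max c h hcl) (by omega)
        intro i hi
        rw [hmaxchar i hi]
        omega
      · apply bitonic_of_wrap (p := a) (q := min (a+e-h) a) (length_halfzip max c h hcl)
          (by omega) (by omega)
        intro i hi
        rw [hmaxchar i hi]
        omega
  · intro x hx y hy
    rcases le_or_gt e h with he | he
    · -- all mins are false
      have hxf : x = false := by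
        rw [List.mem_iff_getElem] at hx
        obtain ⟨i, hi, hgi⟩ := hx
        have hi' : i < h := by rwa [length_halfzip min c h hcl] at hi
        cases x with
        | false => rfl
        | true => exact absurd ((hminchar i hi').mp hgi) (by omega)
      rw [hxf]
      exact Bool.false_le y
    · -- all maxes are true
      have hyt : y = true := by
        rw [List.mem_iff_getElem] at hy
        obtain ⟨j, hj, hgj⟩ := hy
        have hj' : j < h := by rwa [length_halfzip max c h hcl] at hj
        exact hgj.symm.trans ((hmaxchar j hj').mpr (by omega))
      rw [hyt]
      exact Bool.le_true x

theorem bitonic_half_cleaner (t : ℕ) (ht : 1 ≤ t) (l : List Bool)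
    (hlen : l.length = 2 ^ t) (hb : IsBitonic l) :
    (IsBitonic (List.zipWith min (l.take (2 ^ (t - 1))) (l.drop (2 ^ (t - 1))))) ∧
    (IsBitonic (List.zipWith max (l.take (2 ^ (t - 1))) (l.drop (2 ^ (t - 1))))) ∧
    (∀ a ∈ List.zipWith min (l.take (2 ^ (t - 1))) (l.drop (2 ^ (t - 1))),
      ∀ b ∈ List.zipWith max (l.take (2 ^ (t - 1))) (l.drop (2 ^ (t - 1))),
        a ≤ b) := by
  obtain ⟨s, rfl⟩ : ∃ s, t = s + 1 := ⟨t - 1, by omega⟩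
  simp only [Nat.add_sub_cancel]
  have hh : 0 < 2^s := Nat.two_pow_pos s
  have h2 : l.length = 2 * 2^s := by rw [hlen, pow_succ]; ring
  have hne : l ≠ [] := by
    intro h0
    rw [h0] at h2
    simp at h2
  obtain ⟨m, a, e, d, hl, hsum⟩ := bitonic_canon hb hne
  have hsum2 : a + e + d = 2 * 2^s := by omega
  have hcl : (replicate a false ++ replicate e true ++ replicate d false).length = 2 * 2^s := by
    simp; omega
  rw [hl, halfzip_rotate min (fun x y => min_comm x y) _ (2^s) m hh hcl,
      halfzip_rotate max (fun x y => max_comm x y) _ (2^s) m hh hcl]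
  obtain ⟨H1, H2, H3⟩ := canon_main (2^s) a e d hh hsum2
  refine ⟨isBitonic_rotate _ H1, isBitonic_rotate _ H2, ?_⟩
  intro x hx y hy
  rw [List.mem_rotate] at hx hy
  exact H3 x hx y hy
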